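/- Partial trace recursion for the q-antisymmetrizer: with Λ^{ab}_{cd}=q(a,b)δ^a_d δ^b_c and the operators 𝓘_{1...k} = I − Λ_{k−1,k} + Λ_{k−2,k−1}Λ_{k−1,k} − ... , one has Tr_k(𝓘_{1...k}) = N·I − 𝓘_{1...k−1}, where Tr_k is the partial trace over the k-th tensor factor of (ℂ^N)^{⊗k}. -/

import Mathlib

/-- `Λ` acting at positions `t, t+1` of `(ℂ^N)^{⊗k}` (identity if `t+1 ≥ k`):
built from `Λ^{ab}_{cd} = q(a,b) δ^a_d δ^b_c`, it maps `e_g` to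
`q(g t, g (t+1)) e_{g ∘ swap(t,t+1)}`. -/
def lamPos {N : ℕ} (q : Fin N → Fin N → ℂ) (k t : ℕ) :
    Matrix (Fin k → Fin N) (Fin k → Fin N) ℂ :=
  if h : t + 1 < k then
    fun f g =>
      if g = f ∘ (Equiv.swap (⟨t, Nat.lt_of_succ_lt h⟩ : Fin k) ⟨t + 1, h⟩)
      then q (f ⟨t, Nat.lt_of_succ_lt h⟩) (f ⟨t + 1, h⟩) else 0
  else 1

/-- The operators `𝓘_{1...m}` of the q-antisymmetrizer recursion:
`𝓘_{1} = I`, `𝓘_{1...m} = I − 𝓘_{1...m−1} Λ_{m−1,m}`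
(in 0-based positions `Λ_{m−1,m} = lamPos q k (m−2)`), realized as matrices on
`(ℂ^N)^{⊗k}`. -/
noncomputable def Ical {N : ℕ} (q : Fin N → Fin N → ℂ) (k : ℕ) :
    ℕ → Matrix (Fin k → Fin N) (Fin k → Fin N) ℂ
  | 0 => 1
  | 1 => 1
  | (m + 2) => 1 - Ical q k (m + 1) * lamPos q k m

/-- The q-antisymmetrizer `W_{1...m}` defined by the recursion
`W_{1...m} = 𝓘_{1...m} W_{1...m−1}`, `W_1 = I`. -/
noncomputable def Wmat {N : ℕ} (q : Fin N → Fin N → ℂ) (k : ℕ) :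
    ℕ → Matrix (Fin k → Fin N) (Fin k → Fin N) ℂ
  | 0 => 1
  | (m + 1) => Ical q k (m + 1) * Wmat q k m


lemma my_snoc_inj {N m : ℕ} {f g : Fin m → Fin N} {x y : Fin N} :
    (Fin.snoc f x : Fin (m+1) → Fin N) = Fin.snoc g y ↔ f = g ∧ x = y := by
  constructor
  · intro h
    constructor
    · funext i
      have := congrFun h (Fin.castSucc i)
      simpa using this
    · have := congrFun h (Fin.last m)
      simpa using this
  · rintro ⟨rfl, rfl⟩; rfl

lemma swap_castSucc {n : ℕ} (a b i : Fin n) :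
    Equiv.swap (Fin.castSucc a) (Fin.castSucc b) (Fin.castSucc i)
      = Fin.castSucc (Equiv.swap a b i) :=
  (Fin.castSucc_injective n).swap_apply a b i

lemma swap_castSucc' {n a b : ℕ} {ha' : a < n + 1} {hb' : b < n + 1}
    (ha : a < n) (hb : b < n) (i : Fin n) :
    Equiv.swap (⟨a, ha'⟩ : Fin (n+1)) ⟨b, hb'⟩ (Fin.castSucc i)
      = Fin.castSucc (Equiv.swap ⟨a, ha⟩ ⟨b, hb⟩ i) :=
  swap_castSucc ⟨a, ha⟩ ⟨b, hb⟩ i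

lemma swap_last {n : ℕ} (a b : Fin n) :
    Equiv.swap (Fin.castSucc a) (Fin.castSucc b) (Fin.last n) = Fin.last n :=
  Equiv.swap_apply_of_ne_of_ne (Fin.castSucc_lt_last a).ne' (Fin.castSucc_lt_last b).ne'

lemma swap_last' {n a b : ℕ} {ha' : a < n + 1} {hb' : b < n + 1}
    (ha : a < n) (hb : b < n) :
    Equiv.swap (⟨a, ha'⟩ : Fin (n+1)) ⟨b, hb'⟩ (Fin.last n) = Fin.last n :=
  swap_last ⟨a, ha⟩ ⟨b, hb⟩

lemma snoc_mk {N n a : ℕ} {ha' : a < n + 1} (ha : a < n)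
    (f : Fin n → Fin N) (x : Fin N) :
    (Fin.snoc f x : Fin (n+1) → Fin N) ⟨a, ha'⟩ = f ⟨a, ha⟩ :=
  @Fin.snoc_castSucc n (fun _ => Fin N) x f ⟨a, ha⟩

lemma lamPos_snoc {N m : ℕ} (q : Fin N → Fin N → ℂ) (t : ℕ) (ht : t + 1 < m + 1)
    (f g : Fin (m+1) → Fin N) (x y : Fin N) :
    lamPos q (m+2) t (Fin.snoc f x) (Fin.snoc g y)
      = if x = y then lamPos q (m+1) t f g else 0 := by
  have ht2 : t + 1 < m + 2 := Nat.lt_succ_of_lt ht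
  have htm : t < m + 1 := Nat.lt_of_succ_lt ht
  unfold lamPos
  erw [dif_pos ht2, dif_pos ht]
  have hcomp : (Fin.snoc f x : Fin (m+2) → Fin N) ∘
      (Equiv.swap (⟨t, Nat.lt_of_succ_lt ht2⟩ : Fin (m+2)) ⟨t+1, ht2⟩)
      = Fin.snoc (f ∘ (Equiv.swap (⟨t, Nat.lt_of_succ_lt ht⟩ : Fin (m+1)) ⟨t+1, ht⟩)) x := by
    funext j
    refine Fin.lastCases ?_ ?_ j
    · simp only [Function.comp_apply, swap_last' htm ht, Fin.snoc_last]
    · intro i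
      simp only [Function.comp_apply, swap_castSucc' htm ht, Fin.snoc_castSucc]
  simp only [hcomp, my_snoc_inj, snoc_mk htm, snoc_mk ht]
  by_cases hxy : x = y
  · subst hxy; simp [and_comm]
  · simp [hxy, Ne.symm hxy]

lemma one_snoc {N m : ℕ} (f g : Fin (m+1) → Fin N) (x y : Fin N) :
    (1 : Matrix (Fin (m+2) → Fin N) (Fin (m+2) → Fin N) ℂ) (Fin.snoc f x) (Fin.snoc g y)
      = if x = y then (1 : Matrix (Fin (m+1) → Fin N) (Fin (m+1) → Fin N) ℂ) f g else 0 := by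
  simp only [Matrix.one_apply, my_snoc_inj]
  by_cases hxy : x = y
  · subst hxy; simp
  · simp [hxy]

lemma sum_snoc {N m : ℕ} (F : (Fin (m+2) → Fin N) → ℂ) :
    ∑ h : Fin (m+2) → Fin N, F h
      = ∑ p : Fin N × (Fin (m+1) → Fin N), F (Fin.snoc p.2 p.1) := by
  exact (Fintype.sum_equiv (Fin.snocEquiv (fun _ => Fin N)) _ _ (fun p => rfl)).symm

lemma Ical_snoc {N m : ℕ} (q : Fin N → Fin N → ℂ) :
    ∀ j, j ≤ m + 1 → ∀ (f g : Fin (m+1) → Fin N) (x y : Fin N),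
    Ical q (m+2) j (Fin.snoc f x) (Fin.snoc g y)
      = if x = y then Ical q (m+1) j f g else 0
  | 0, _, f, g, x, y => by simpa [Ical] using one_snoc f g x y
  | 1, _, f, g, x, y => by simpa [Ical] using one_snoc f g x y
  | (j+2), hj, f, g, x, y => by
    have hj1 : j + 1 ≤ m + 1 := le_trans (Nat.le_succ _) hj
    have hjm : j + 1 < m + 1 := hj
    show (1 - Ical q (m+2) (j+1) * lamPos q (m+2) j) _ _ = _
    rw [Matrix.sub_apply, Matrix.mul_apply, one_snoc, sum_snoc
      (fun h => Ical q (m+2) (j+1) (Fin.snoc f x) h * lamPos q (m+2) j h (Fin.snoc g y))]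
    have : ∀ p : Fin N × (Fin (m+1) → Fin N),
        Ical q (m+2) (j+1) (Fin.snoc f x) (Fin.snoc p.2 p.1)
          * lamPos q (m+2) j (Fin.snoc p.2 p.1) (Fin.snoc g y)
        = if x = y then
            (if x = p.1 then Ical q (m+1) (j+1) f p.2 * lamPos q (m+1) j p.2 g else 0)
          else (if x = p.1 ∧ p.1 = y then Ical q (m+1) (j+1) f p.2 * lamPos q (m+1) j p.2 g else 0) := by
      intro p
      rw [Ical_snoc q (j+1) hj1, lamPos_snoc q j hjm]
      by_cases h1 : x = p.1 <;> by_cases h2 : p.1 = y <;>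
        by_cases h3 : x = y <;> simp_all
    simp only [this]
    by_cases hxy : x = y
    · subst hxy
      simp only [if_pos rfl, Matrix.sub_apply, Matrix.mul_apply]
      rw [Fintype.sum_prod_type]
      congr 1
      rw [Finset.sum_comm]
      congr 1
      funext h
      simp
    · simp only [if_neg hxy, Matrix.sub_apply]
      have : ∀ p : Fin N × (Fin (m+1) → Fin N),
          (if x = p.1 ∧ p.1 = y then Ical q (m+1) (j+1) f p.2 * lamPos q (m+1) j p.2 g else 0) = 0 := by
        intro p
        split_ifs with h
        · exact absurd (h.1.trans h.2) hxy
        · rfl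
      simp [this]

lemma lamPos_last {N m : ℕ} (q : Fin N → Fin N → ℂ)
    (h' g : Fin (m+1) → Fin N) (z x : Fin N) :
    lamPos q (m+2) m (Fin.snoc h' z) (Fin.snoc g x)
      = if (g = Fin.snoc (Fin.init h') z ∧ x = h' (Fin.last m))
          then q (h' (Fin.last m)) z else 0 := by
  have h : m + 1 < m + 2 := Nat.lt_succ_self _
  unfold lamPos
  erw [dif_pos h]
  have ea : (⟨m, Nat.lt_of_succ_lt h⟩ : Fin (m+2)) = Fin.castSucc (Fin.last m) := rfl
  have eb : (⟨m+1, h⟩ : Fin (m+2)) = Fin.last (m+1) := rfl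
  have hcomp : (Fin.snoc h' z : Fin (m+2) → Fin N) ∘
      (Equiv.swap (⟨m, Nat.lt_of_succ_lt h⟩ : Fin (m+2)) ⟨m+1, h⟩)
      = Fin.snoc (Fin.snoc (Fin.init h') z) (h' (Fin.last m)) := by
    funext j
    refine Fin.lastCases ?_ (fun i => ?_) j
    · simp only [Function.comp_apply, ea, eb, Equiv.swap_apply_right,
        Fin.snoc_castSucc, Fin.snoc_last]
    · refine Fin.lastCases ?_ (fun i' => ?_) i
      · simp only [Function.comp_apply, ea, eb, Equiv.swap_apply_left,
          Fin.snoc_castSucc, Fin.snoc_last]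
      · have h1 : Fin.castSucc (Fin.castSucc i') ≠ Fin.castSucc (Fin.last m) := by
          simp [Fin.castSucc_injective, (Fin.castSucc_lt_last i').ne]
        have h2 : Fin.castSucc (Fin.castSucc i') ≠ Fin.last (m+1) :=
          (Fin.castSucc_lt_last _).ne
        simp only [Function.comp_apply, ea, eb, Equiv.swap_apply_of_ne_of_ne h1 h2,
          Fin.snoc_castSucc, Fin.init]
  rw [hcomp]
  simp only [my_snoc_inj, ea, eb, Fin.snoc_castSucc, Fin.snoc_last]

/-- partial trace recursion for the q-antisymmetrizer operators:
`Tr_k(𝓘_{1...k}) = N·I − 𝓘_{1...k−1}`, where `Tr_k` is the partial trace over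
the last tensor factor (stated for `k = m+2 ≥ 2`). -/
theorem Ical_partial_trace {N : ℕ} (q : Fin N → Fin N → ℂ)
    (h1 : ∀ a, q a a = 1)
    (h2 : ∀ a b, q a b * q b a = 1) :
    ∀ (m : ℕ) (f g : Fin (m + 1) → Fin N),
      ∑ x : Fin N, Ical q (m + 2) (m + 2) (Fin.snoc f x) (Fin.snoc g x)
        = (N : ℂ) * (1 : Matrix (Fin (m + 1) → Fin N) (Fin (m + 1) → Fin N) ℂ) f g
          - Ical q (m + 1) (m + 1) f g := by
  intro m f g
  have key : ∀ x : Fin N,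
      Ical q (m + 2) (m + 2) (Fin.snoc f x) (Fin.snoc g x)
        = (1 : Matrix (Fin (m+1) → Fin N) (Fin (m+1) → Fin N) ℂ) f g
          - if x = g (Fin.last m) then Ical q (m+1) (m+1) f g else 0 := by
    intro x
    show (1 - Ical q (m+2) (m+1) * lamPos q (m+2) m) _ _ = _
    rw [Matrix.sub_apply, Matrix.mul_apply, one_snoc,
      sum_snoc (fun h => Ical q (m+2) (m+1) (Fin.snoc f x) h
        * lamPos q (m+2) m h (Fin.snoc g x))]
    simp only [if_pos rfl]
    congr 1
    have hpt : ∀ p : Fin N × (Fin (m+1) → Fin N),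
        Ical q (m+2) (m+1) (Fin.snoc f x) (Fin.snoc p.2 p.1)
          * lamPos q (m+2) m (Fin.snoc p.2 p.1) (Fin.snoc g x)
        = if p.2 = g ∧ p.1 = x ∧ x = g (Fin.last m)
            then Ical q (m+1) (m+1) f g else 0 := by
      rintro ⟨z, h'⟩
      rw [Ical_snoc q (m+1) le_rfl, lamPos_last]
      by_cases hC : h' = g ∧ z = x ∧ x = g (Fin.last m)
      · obtain ⟨rfl, rfl, hC3⟩ := hC
        rw [if_pos rfl, if_pos, if_pos ⟨rfl, rfl, hC3⟩, hC3, h1, mul_one]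
        refine ⟨?_, hC3⟩
        conv_rhs => rw [hC3]
        exact (Fin.snoc_init_self h').symm
      · rw [if_neg hC]
        by_cases hxz : x = z
        · subst hxz
          by_cases hD : g = Fin.snoc (Fin.init h') x ∧ x = h' (Fin.last m)
          · exfalso
            obtain ⟨hD1, hD2⟩ := hD
            have hg : h' = g := by rw [hD1, hD2, Fin.snoc_init_self]
            exact hC ⟨hg, rfl, by rw [← hg, ← hD2]⟩
          · rw [if_neg hD, mul_zero]
        · rw [if_neg hxz, zero_mul]
    rw [Fintype.sum_congr _ _ hpt, Fintype.sum_prod_type]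
    simp only [ite_and]
    rw [Finset.sum_comm]
    simp [Finset.sum_ite_eq, Finset.sum_ite_eq']
  rw [Fintype.sum_congr _ _ key, Finset.sum_sub_distrib]
  simp [Finset.sum_ite_eq', Fintype.card_fin, mul_comm]
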